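/- Let (ℱ_{i,j})_{i,j≥0} be a two-parameter filtration satisfying the (F4) condition, and let C ∈ L¹(ℱ_{∞,∞}). Then 𝔼[ Σ_i sup_j |𝔼_{∞,j}(Δ^{(1)}_i C)| ] ≥ 𝔼[ sup_{i,j} |𝔼_{i,j} C| ], where Δ^{(1)}_i = 𝔼_{i,∞} − 𝔼_{i−1,∞} for i ≥ 1 and Δ^{(1)}_0 = 𝔼_{0,∞}. -/

import Mathlib

open MeasureTheory ENNReal

/-- The σ-algebra `ℱ_{i,∞} = ⋁_j ℱ_{i,j}`. -/
def rowSup {Ω : Type*} (𝓕 : ℕ → ℕ → MeasurableSpace Ω) (i : ℕ) : MeasurableSpace Ω :=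
  ⨆ j, 𝓕 i j

/-- The σ-algebra `ℱ_{∞,j} = ⋁_i ℱ_{i,j}`. -/
def colSup {Ω : Type*} (𝓕 : ℕ → ℕ → MeasurableSpace Ω) (j : ℕ) : MeasurableSpace Ω :=
  ⨆ i, 𝓕 i j

/-- A two-parameter filtration satisfying the (F4) condition:
`𝔼_{i,j} 𝔼_{k,l} = 𝔼_{min(i,k),min(j,l)} = 𝔼_{k,l} 𝔼_{i,j}` as operators on `L¹`. -/
structure IsF4Filtration {Ω : Type*} [m0 : MeasurableSpace Ω] (μ : Measure Ω)
    (𝓕 : ℕ → ℕ → MeasurableSpace Ω) : Prop where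
  le : ∀ i j, 𝓕 i j ≤ m0
  mono_left : ∀ i j, 𝓕 i j ≤ 𝓕 (i + 1) j
  mono_right : ∀ i j, 𝓕 i j ≤ 𝓕 i (j + 1)
  f4 : ∀ i j k l : ℕ, ∀ f : Ω → ℝ, Integrable f μ →
    μ[μ[f|𝓕 k l]|𝓕 i j] =ᵐ[μ] μ[f|𝓕 (min i k) (min j l)]

/-- One-parameter martingale difference `Δ^{(1)}_i` with respect to `(ℱ_{i,∞})_i`:
`Δ^{(1)}_0 = 𝔼_{0,∞}` and `Δ^{(1)}_{i+1} = 𝔼_{i+1,∞} - 𝔼_{i,∞}`. -/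
noncomputable def d1 {Ω : Type*} [MeasurableSpace Ω] (μ : Measure Ω)
    (𝓕 : ℕ → ℕ → MeasurableSpace Ω) : ℕ → (Ω → ℝ) → Ω → ℝ
  | 0, f => μ[f|rowSup 𝓕 0]
  | (i + 1), f => μ[f|rowSup 𝓕 (i + 1)] - μ[f|rowSup 𝓕 i]

/-- One-parameter martingale difference `Δ^{(2)}_j` with respect to `(ℱ_{∞,j})_j`. -/
noncomputable def d2 {Ω : Type*} [MeasurableSpace Ω] (μ : Measure Ω)
    (𝓕 : ℕ → ℕ → MeasurableSpace Ω) : ℕ → (Ω → ℝ) → Ω → ℝ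
  | 0, f => μ[f|colSup 𝓕 0]
  | (j + 1), f => μ[f|colSup 𝓕 (j + 1)] - μ[f|colSup 𝓕 j]

/-- The rectangular martingale difference `Δ_{i,j} = Δ^{(1)}_i Δ^{(2)}_j`. -/
noncomputable def dd {Ω : Type*} [MeasurableSpace Ω] (μ : Measure Ω)
    (𝓕 : ℕ → ℕ → MeasurableSpace Ω) (i j : ℕ) (f : Ω → ℝ) : Ω → ℝ :=
  d1 μ 𝓕 i (d2 μ 𝓕 j f)

section Aux

variable {Ω : Type*} [m0 : MeasurableSpace Ω] {μ : Measure Ω} [IsProbabilityMeasure μ]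
  {𝓕 : ℕ → ℕ → MeasurableSpace Ω} (hF4 : IsF4Filtration μ 𝓕)

/-- The row filtration `j ↦ ℱ_{i,j}`. -/
def rowFiltration (hF4 : IsF4Filtration μ 𝓕) (i : ℕ) : Filtration ℕ m0 where
  seq := fun j => 𝓕 i j
  mono' := monotone_nat_of_le_succ fun j => hF4.mono_right i j
  le' := fun j => hF4.le i j

/-- The column filtration `i ↦ ℱ_{i,j}`. -/
def colFiltration (hF4 : IsF4Filtration μ 𝓕) (j : ℕ) : Filtration ℕ m0 where
  seq := fun i => 𝓕 i j
  mono' := monotone_nat_of_le_succ fun i => hF4.mono_left i j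
  le' := fun i => hF4.le i j

include hF4 in
lemma rowSup_le (i : ℕ) : rowSup 𝓕 i ≤ m0 := iSup_le fun j => hF4.le i j

include hF4 in
lemma colSup_le (j : ℕ) : colSup 𝓕 j ≤ m0 := iSup_le fun i => hF4.le i j

include hF4 in
/-- Tower: `𝔼_{i,j} 𝔼_{i,∞} = 𝔼_{i,j}`. -/
lemma condexp_rowSup_condexp (C : Ω → ℝ) (i j : ℕ) :
    μ[μ[C|rowSup 𝓕 i]|𝓕 i j] =ᵐ[μ] μ[C|𝓕 i j] :=
  condExp_condExp_of_le (le_iSup (𝓕 i) j) (rowSup_le hF4 i)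

include hF4 in
/-- `𝔼_{n,m} 𝔼_{i,∞} C = 𝔼_{i,m} C` for `i ≤ n`. -/
lemma condexp_condexp_rowSup (C : Ω → ℝ) (hC : Integrable C μ) {i n : ℕ} (m : ℕ)
    (hin : i ≤ n) :
    μ[μ[C|rowSup 𝓕 i]|𝓕 n m] =ᵐ[μ] μ[C|𝓕 i m] := by
  set g : Ω → ℝ := μ[C|rowSup 𝓕 i] with hg
  have hgmeas : StronglyMeasurable[⨆ j, rowFiltration hF4 i j] g := stronglyMeasurable_condExp
  have htend : Filter.Tendsto (fun j => eLpNorm (μ[g|rowFiltration hF4 i j] - g) 1 μ)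
      Filter.atTop (nhds 0) :=
    integrable_condExp.tendsto_eLpNorm_condExp hgmeas
  have hkey : ∀ j, m ≤ j →
      eLpNorm (μ[C|𝓕 i m] - μ[g|𝓕 n m]) 1 μ ≤ eLpNorm (μ[g|𝓕 i j] - g) 1 μ := by
    intro j hmj
    have h1 : μ[μ[g|𝓕 i j] - g|𝓕 n m] =ᵐ[μ] μ[μ[g|𝓕 i j]|𝓕 n m] - μ[g|𝓕 n m] :=
      condExp_sub integrable_condExp integrable_condExp _
    have h2 : μ[μ[g|𝓕 i j]|𝓕 n m] =ᵐ[μ] μ[C|𝓕 i m] := by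
      have h3 : μ[μ[g|𝓕 i j]|𝓕 n m] =ᵐ[μ] μ[μ[C|𝓕 i j]|𝓕 n m] :=
        condExp_congr_ae (condexp_rowSup_condexp hF4 C i j)
      have h4 := hF4.f4 n m i j C hC
      rw [min_eq_right hin, min_eq_left hmj] at h4
      exact h3.trans h4
    calc eLpNorm (μ[C|𝓕 i m] - μ[g|𝓕 n m]) 1 μ
        = eLpNorm (μ[μ[g|𝓕 i j] - g|𝓕 n m]) 1 μ := by
          refine eLpNorm_congr_ae ?_
          filter_upwards [h1, h2] with ω hω1 hω2
          simp only [Pi.sub_apply] at *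
          rw [hω1, hω2]
      _ ≤ eLpNorm (μ[g|𝓕 i j] - g) 1 μ := eLpNorm_one_condExp_le_eLpNorm _
  have hzero : eLpNorm (μ[C|𝓕 i m] - μ[g|𝓕 n m]) 1 μ = 0 := by
    have := ge_of_tendsto htend (Filter.eventually_atTop.2 ⟨m, hkey⟩)
    exact le_antisymm this (zero_le)
  have := (eLpNorm_eq_zero_iff
    ((stronglyMeasurable_condExp.mono (hF4.le i m)).aestronglyMeasurable.sub
      (stronglyMeasurable_condExp.mono (hF4.le n m)).aestronglyMeasurable)
    one_ne_zero).1 hzero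
  filter_upwards [this] with ω hω
  have : (μ[C|𝓕 i m]) ω - (μ[g|𝓕 n m]) ω = 0 := hω
  linarith

include hF4 in
/-- `𝔼_{∞,m} 𝔼_{i,∞} C = 𝔼_{i,m} C`. -/
lemma condexp_colSup_condexp_rowSup (C : Ω → ℝ) (hC : Integrable C μ) (i m : ℕ) :
    μ[μ[C|rowSup 𝓕 i]|colSup 𝓕 m] =ᵐ[μ] μ[C|𝓕 i m] := by
  set g : Ω → ℝ := μ[C|rowSup 𝓕 i] with hg
  set h : Ω → ℝ := μ[g|colSup 𝓕 m] with hh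
  have hhmeas : StronglyMeasurable[⨆ n, colFiltration hF4 m n] h := stronglyMeasurable_condExp
  have htend : Filter.Tendsto (fun n => eLpNorm (μ[h|colFiltration hF4 m n] - h) 1 μ)
      Filter.atTop (nhds 0) :=
    integrable_condExp.tendsto_eLpNorm_condExp hhmeas
  have hkey : ∀ n, i ≤ n →
      eLpNorm (μ[C|𝓕 i m] - h) 1 μ ≤ eLpNorm (μ[h|𝓕 n m] - h) 1 μ := by
    intro n hin
    refine le_of_eq (eLpNorm_congr_ae ?_).symm
    have h1 : μ[h|𝓕 n m] =ᵐ[μ] μ[g|𝓕 n m] :=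
      condExp_condExp_of_le (le_iSup (fun k => 𝓕 k m) n) (colSup_le hF4 m)
    have h2 : μ[g|𝓕 n m] =ᵐ[μ] μ[C|𝓕 i m] := condexp_condexp_rowSup hF4 C hC m hin
    filter_upwards [h1, h2] with ω hω1 hω2
    simp only [Pi.sub_apply]
    rw [show (μ[h|𝓕 n m]) ω = (μ[C|𝓕 i m]) ω from hω1.trans hω2]
  have hzero : eLpNorm (μ[C|𝓕 i m] - h) 1 μ = 0 := by
    have := ge_of_tendsto htend (Filter.eventually_atTop.2 ⟨i, hkey⟩)
    exact le_antisymm this (zero_le)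
  have := (eLpNorm_eq_zero_iff
    ((stronglyMeasurable_condExp.mono (hF4.le i m)).aestronglyMeasurable.sub
      (stronglyMeasurable_condExp.mono (colSup_le hF4 m)).aestronglyMeasurable)
    one_ne_zero).1 hzero
  filter_upwards [this] with ω hω
  have : (μ[C|𝓕 i m]) ω - h ω = 0 := hω
  linarith

include hF4 in
/-- The partial sums of `𝔼_{∞,m}(Δ^{(1)}_i C)` telescope to `𝔼_{n,m} C`. -/
lemma partial_sum_d1 (C : Ω → ℝ) (hC : Integrable C μ) (n m : ℕ) :
    (fun ω => ∑ i ∈ Finset.range (n + 1), (μ[d1 μ 𝓕 i C|colSup 𝓕 m]) ω)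
      =ᵐ[μ] μ[C|𝓕 n m] := by
  induction n with
  | zero =>
    have h0 : d1 μ 𝓕 0 C = μ[C|rowSup 𝓕 0] := rfl
    simpa [h0] using condexp_colSup_condexp_rowSup hF4 C hC 0 m
  | succ n ih =>
    have hstep : d1 μ 𝓕 (n + 1) C = μ[C|rowSup 𝓕 (n + 1)] - μ[C|rowSup 𝓕 n] := rfl
    have hsub : μ[d1 μ 𝓕 (n + 1) C|colSup 𝓕 m]
        =ᵐ[μ] μ[μ[C|rowSup 𝓕 (n + 1)]|colSup 𝓕 m] - μ[μ[C|rowSup 𝓕 n]|colSup 𝓕 m] := by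
      rw [hstep]; exact condExp_sub integrable_condExp integrable_condExp _
    filter_upwards [ih, hsub, condexp_colSup_condexp_rowSup hF4 C hC (n + 1) m,
      condexp_colSup_condexp_rowSup hF4 C hC n m] with ω hω1 hω2 hω3 hω4
    rw [Finset.sum_range_succ, hω1]
    have : (μ[d1 μ 𝓕 (n + 1) C|colSup 𝓕 m]) ω = (μ[C|𝓕 (n + 1) m]) ω - (μ[C|𝓕 n m]) ω := by
      rw [hω2]; simp only [Pi.sub_apply]; rw [hω3, hω4]
    rw [this]; ring

end Aux

/-- For an (F4) two-parameter filtration and `C ∈ L¹(ℱ_{∞,∞})`,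
`𝔼[Σ_i sup_j |𝔼_{∞,j}(Δ^{(1)}_i C)|] ≥ 𝔼[sup_{i,j} |𝔼_{i,j} C|]`. -/
theorem sum_sup_ge_maximal {Ω : Type*} [m0 : MeasurableSpace Ω]
    (μ : Measure Ω) [IsProbabilityMeasure μ] (𝓕 : ℕ → ℕ → MeasurableSpace Ω)
    (hF4 : IsF4Filtration μ 𝓕)
    (C : Ω → ℝ) (hC : Integrable C μ) (hCm : Measurable[(⨆ i, ⨆ j, 𝓕 i j)] C) :
    ∫⁻ ω, ⨆ n, ⨆ m, (‖(μ[C|𝓕 n m]) ω‖₊ : ℝ≥0∞) ∂μ ≤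
      ∫⁻ ω, ∑' i : ℕ, ⨆ j, (‖(μ[d1 μ 𝓕 i C|colSup 𝓕 j]) ω‖₊ : ℝ≥0∞) ∂μ := by
  refine lintegral_mono_ae ?_
  have hae : ∀ᵐ ω ∂μ, ∀ n m : ℕ,
      ∑ i ∈ Finset.range (n + 1), (μ[d1 μ 𝓕 i C|colSup 𝓕 m]) ω = (μ[C|𝓕 n m]) ω := by
    rw [ae_all_iff]; intro n; rw [ae_all_iff]; intro m
    exact partial_sum_d1 hF4 C hC n m
  filter_upwards [hae] with ω hω
  refine iSup_le fun n => iSup_le fun m => ?_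
  calc (‖(μ[C|𝓕 n m]) ω‖₊ : ℝ≥0∞)
      = ‖∑ i ∈ Finset.range (n + 1), (μ[d1 μ 𝓕 i C|colSup 𝓕 m]) ω‖₊ := by rw [hω n m]
    _ ≤ ∑ i ∈ Finset.range (n + 1), (‖(μ[d1 μ 𝓕 i C|colSup 𝓕 m]) ω‖₊ : ℝ≥0∞) := by
        rw [← ENNReal.coe_finset_sum]
        exact ENNReal.coe_le_coe.2 (nnnorm_sum_le _ _)
    _ ≤ ∑ i ∈ Finset.range (n + 1), ⨆ j, (‖(μ[d1 μ 𝓕 i C|colSup 𝓕 j]) ω‖₊ : ℝ≥0∞) :=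
        Finset.sum_le_sum fun i _ =>
          le_iSup (fun j => (‖(μ[d1 μ 𝓕 i C|colSup 𝓕 j]) ω‖₊ : ℝ≥0∞)) m
    _ ≤ ∑' i : ℕ, ⨆ j, (‖(μ[d1 μ 𝓕 i C|colSup 𝓕 j]) ω‖₊ : ℝ≥0∞) := ENNReal.sum_le_tsum _
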